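/- [Second claim in the proof of Proposition 1] Let (λ_s, π_s)_{s∈S} be an optimal splitting of the prior π° ∈ Δ(Ω) satisfying Σ_{s∈S} λ_s v̄(π_s) = v̄(π°) (the decision-maker does not benefit) and Σ_{s∈S} λ_s ū(π_s) > ū(π°) (the experts strictly benefit from persuasion). Then for every a ∈ br(π°) there exists s ∈ S with u(a, π_s) < ū(π_s). -/
import Mathlib


open Finset

variable {Ω A : Type*}

/-- Expected payoff of mixed action `α` at belief `π` (bilinear extension of `u`). -/
noncomputable def pay [Fintype Ω] [Fintype A] (u : A → Ω → ℝ) (α : A → ℝ) (π : Ω → ℝ) : ℝ :=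
  ∑ a, ∑ ω, α a * π ω * u a ω

/-- Expected payoff of pure action `a` at belief `π`. -/
noncomputable def payP [Fintype Ω] (u : A → Ω → ℝ) (a : A) (π : Ω → ℝ) : ℝ :=
  ∑ ω, π ω * u a ω

/-- Pure best replies of the decision-maker at belief `π`. -/
def br [Fintype Ω] (v : A → Ω → ℝ) (π : Ω → ℝ) : Set A :=
  {a | ∀ a', payP v a' π ≤ payP v a π}

/-- Mixed best replies of the decision-maker at belief `π`. -/
def BR [Fintype Ω] [Fintype A] (v : A → Ω → ℝ) (π : Ω → ℝ) : Set (A → ℝ) :=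
  {α ∈ stdSimplex ℝ A | ∀ α' ∈ stdSimplex ℝ A, pay v α' π ≤ pay v α π}

/-- The expert value function `ū(π) = max_{α ∈ BR(π)} u(α, π)`. -/
noncomputable def ubar [Fintype Ω] [Fintype A] (u v : A → Ω → ℝ) (π : Ω → ℝ) : ℝ :=
  sSup ((fun α => pay u α π) '' BR v π)

/-- The decision-maker value function `v̄(π) = max_a v(a, π)`. -/
noncomputable def vbar [Fintype Ω] [Fintype A] (v : A → Ω → ℝ) (π : Ω → ℝ) : ℝ :=
  ⨆ a, payP v a π

/-- Actions that are a best reply to some belief. -/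
def Ahat [Fintype Ω] [Fintype A] (v : A → Ω → ℝ) : Set A :=
  {a | ∃ π ∈ stdSimplex ℝ Ω, a ∈ br v π}

/-- Mixed actions supported on `B`. -/
def simplexOn [Fintype A] (B : Set A) : Set (A → ℝ) :=
  {α | α ∈ stdSimplex ℝ A ∧ ∀ a ∉ B, α a = 0}

/-- `(lam, p)` is a splitting of the prior. -/
def IsSplitting [Fintype Ω] {S : Type*} [Fintype S] (lam : S → ℝ) (p : S → Ω → ℝ)
    (prior : Ω → ℝ) : Prop :=
  (∀ s, 0 < lam s) ∧ (∑ s, lam s) = 1 ∧ (∀ s, p s ∈ stdSimplex ℝ Ω) ∧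
    ∀ ω, (∑ s, lam s * p s ω) = prior ω

/-- `(lam, p)` is an optimal splitting of the prior: it attains `cav ū (prior)`. -/
def IsOptimalSplitting [Fintype Ω] [Fintype A] (u v : A → Ω → ℝ) {S : Type*} [Fintype S]
    (lam : S → ℝ) (p : S → Ω → ℝ) (prior : Ω → ℝ) : Prop :=
  IsSplitting lam p prior ∧
    ∀ (T : Type) [Fintype T] [Nonempty T] (mu : T → ℝ) (q : T → Ω → ℝ),
      IsSplitting mu q prior →
        (∑ t, mu t * ubar u v (q t)) ≤ ∑ s, lam s * ubar u v (p s)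

/-- Beliefs at which `a` is optimal for the decision-maker. -/
def BRinv [Fintype Ω] [Fintype A] (v : A → Ω → ℝ) (a : A) : Set (Ω → ℝ) :=
  {π ∈ stdSimplex ℝ Ω | payP v a π = vbar v π}

/-- No redundant actions for the decision-maker. -/
def NoRedundantDM [Fintype Ω] [Fintype A] (v : A → Ω → ℝ) : Prop :=
  ∀ B : Set A, B.Nonempty → B ⊂ Ahat v →
    ∃ π ∈ stdSimplex ℝ Ω, ∀ a ∈ B, payP v a π < vbar v π

/-- No redundant actions for the experts. -/
def NoRedundantExperts [Fintype Ω] (u : A → Ω → ℝ) : Prop :=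
  ∀ a a' : A, a ≠ a' → ∃ ω, u a ω ≠ u a' ω

/-- The expert value function `ū` is concave on the simplex. -/
def UbarConcave [Fintype Ω] [Fintype A] (u v : A → Ω → ℝ) : Prop :=
  ∀ π ∈ stdSimplex ℝ Ω, ∀ π' ∈ stdSimplex ℝ Ω, ∀ t ∈ Set.Icc (0 : ℝ) 1,
    t * ubar u v π + (1 - t) * ubar u v π' ≤ ubar u v (fun ω => t * π ω + (1 - t) * π' ω)

open scoped Classical

lemma payP_le_vbar [Fintype Ω] [Fintype A] (v : A → Ω → ℝ) (a : A) (π : Ω → ℝ) :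
    payP v a π ≤ vbar v π :=
  le_ciSup (f := fun b => payP v b π) (Set.Finite.bddAbove (Set.finite_range _)) a

lemma pay_eq_sum [Fintype Ω] [Fintype A] (u : A → Ω → ℝ) (α : A → ℝ) (π : Ω → ℝ) :
    pay u α π = ∑ a, α a * payP u a π := by
  unfold pay payP
  refine Finset.sum_congr rfl fun a _ => ?_
  rw [Finset.mul_sum]
  exact Finset.sum_congr rfl fun ω _ => by ring

lemma pay_delta [Fintype Ω] [Fintype A] (u : A → Ω → ℝ) (a : A) (π : Ω → ℝ) :
    pay u (fun a' => if a' = a then (1:ℝ) else 0) π = payP u a π := by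
  rw [pay_eq_sum, Finset.sum_eq_single a]
  · simp
  · intro b _ hb; simp [hb]
  · simp

lemma delta_mem_simplex [Fintype A] (a : A) :
    (fun a' => if a' = a then (1:ℝ) else 0) ∈ stdSimplex ℝ A := by
  constructor
  · intro x; dsimp; split <;> norm_num
  · simp

lemma payP_le_ubar [Fintype Ω] [Fintype A] (u v : A → Ω → ℝ) (π : Ω → ℝ)
    (a : A) (ha : a ∈ br v π) : payP u a π ≤ ubar u v π := by
  have hmem : (fun a' => if a' = a then (1:ℝ) else 0) ∈ BR v π := by
    refine ⟨delta_mem_simplex a, fun α' hα' => ?_⟩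
    rw [pay_delta, pay_eq_sum]
    calc ∑ b, α' b * payP v b π ≤ ∑ b, α' b * payP v a π :=
          Finset.sum_le_sum fun b _ => mul_le_mul_of_nonneg_left (ha b) (hα'.1 b)
      _ = payP v a π := by rw [← Finset.sum_mul, hα'.2, one_mul]
  have hbdd : BddAbove ((fun α => pay u α π) '' BR v π) := by
    refine ⟨⨆ b, payP u b π, ?_⟩
    rintro y ⟨α, hα, rfl⟩
    show pay u α π ≤ _
    rw [pay_eq_sum]
    calc ∑ b, α b * payP u b π ≤ ∑ b, α b * ⨆ b, payP u b π :=
          Finset.sum_le_sum fun b _ => mul_le_mul_of_nonneg_left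
            (le_ciSup (f := fun b => payP u b π) (Set.Finite.bddAbove (Set.finite_range _)) b) (hα.1.1 b)
      _ = ⨆ b, payP u b π := by rw [← Finset.sum_mul, hα.1.2, one_mul]
  have : payP u a π = pay u (fun a' => if a' = a then (1:ℝ) else 0) π := (pay_delta u a π).symm
  rw [this]
  exact le_csSup hbdd ⟨_, hmem, rfl⟩

lemma payP_split [Fintype Ω] {S : Type*} [Fintype S] (u : A → Ω → ℝ) (a : A)
    (lam : S → ℝ) (p : S → Ω → ℝ) (prior : Ω → ℝ)
    (hsum : ∀ ω, (∑ s, lam s * p s ω) = prior ω) :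
    payP u a prior = ∑ s, lam s * payP u a (p s) := by
  unfold payP
  calc ∑ ω, prior ω * u a ω = ∑ ω, ∑ s, lam s * (p s ω * u a ω) := by
        refine Finset.sum_congr rfl fun ω _ => ?_
        rw [← hsum ω, Finset.sum_mul]
        exact Finset.sum_congr rfl fun s _ => by ring
    _ = ∑ s, ∑ ω, lam s * (p s ω * u a ω) := Finset.sum_comm
    _ = ∑ s, lam s * ∑ ω, p s ω * u a ω := by
        exact Finset.sum_congr rfl fun s _ => (Finset.mul_sum _ _ _).symm

/-- Second claim in the proof of Proposition 1. -/
theorem prior_best_reply_strictly_suboptimal {Ω A S : Type*} [Fintype Ω] [Nonempty Ω]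
    [Fintype A] [Nonempty A] [Fintype S] [Nonempty S]
    (u v : A → Ω → ℝ) (prior : Ω → ℝ) (hprior : prior ∈ stdSimplex ℝ Ω)
    (lam : S → ℝ) (p : S → Ω → ℝ) (hopt : IsOptimalSplitting u v lam p prior)
    (hdm : (∑ s, lam s * vbar v (p s)) = vbar v prior)
    (hexp : ubar u v prior < ∑ s, lam s * ubar u v (p s)) :
    ∀ a ∈ br v prior, ∃ s, payP u a (p s) < ubar u v (p s) := by
  intro a ha
  by_contra h
  push_neg at h
  obtain ⟨⟨hpos, hlam1, hps, hsum⟩, -⟩ := hopt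
  have hva : vbar v prior = payP v a prior :=
    le_antisymm (ciSup_le ha) (payP_le_vbar v a prior)
  have hsplitv := payP_split v a lam p prior hsum
  have hle : ∀ s, payP v a (p s) ≤ vbar v (p s) := fun s => payP_le_vbar v a (p s)
  have htw : ∀ s, payP v a (p s) = vbar v (p s) := by
    by_contra hc
    push_neg at hc
    obtain ⟨s₀, hs₀⟩ := hc
    have hlt : ∑ s, lam s * payP v a (p s) < ∑ s, lam s * vbar v (p s) :=
      Finset.sum_lt_sum (fun s _ => mul_le_mul_of_nonneg_left (hle s) (hpos s).le)
        ⟨s₀, Finset.mem_univ s₀,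
          mul_lt_mul_of_pos_left (lt_of_le_of_ne (hle s₀) hs₀) (hpos s₀)⟩
    rw [← hsplitv, hdm, hva] at hlt
    exact lt_irrefl _ hlt
  have hbr : ∀ s, a ∈ br v (p s) := by
    intro s a'
    calc payP v a' (p s) ≤ vbar v (p s) := payP_le_vbar v a' (p s)
      _ = payP v a (p s) := (htw s).symm
  have heq : ∀ s, ubar u v (p s) = payP u a (p s) :=
    fun s => le_antisymm (h s) (payP_le_ubar u v _ a (hbr s))
  have hkey : ∑ s, lam s * ubar u v (p s) = payP u a prior := by
    rw [payP_split u a lam p prior hsum]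
    exact Finset.sum_congr rfl fun s _ => by rw [heq s]
  have hub : payP u a prior ≤ ubar u v prior := payP_le_ubar u v prior a ha
  rw [hkey] at hexp
  linarith
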